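/- Let p, q ≥ 2 be coprime integers and let Π be the group with presentation ⟨a, b | aᵖ = b^q⟩. Let ρ : Π → SL(2, ℂ) be a representation whose induced action on ℂ² is irreducible, and let 𝔰𝔩₂(ℂ)_ρ denote the 3-dimensional complex vector space of trace-zero 2×2 complex matrices equipped with the Π-action g·X = ρ(g)·X·ρ(g)⁻¹. Then the first group cohomology H¹(Π, 𝔰𝔩₂(ℂ)_ρ) is a one-dimensional complex vector space. -/

import Mathlib

/-- The single relation `a^p b^{-q}` of the torus knot group `⟨a, b | a^p = b^q⟩`,
where `a` and `b` are the generators indexed by `true` and `false`. -/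
def torusRels (p q : ℤ) : Set (FreeGroup Bool) :=
  {FreeGroup.of true ^ p * (FreeGroup.of false ^ q)⁻¹}

/-- The torus knot group `Π = ⟨a, b | a^p = b^q⟩`. -/
abbrev TorusGroup (p q : ℤ) := PresentedGroup (torusRels p q)

/-- A representation `ρ : G → SL(2,ℂ)` acts irreducibly on `ℂ²` if no one-dimensional
subspace of `ℂ²` is invariant under `ρ(g)` for all `g ∈ G`. -/
def IrreducibleSL2 {G : Type} [Group G]
    (ρ : G →* Matrix.SpecialLinearGroup (Fin 2) ℂ) : Prop :=
  ¬ ∃ W : Submodule ℂ (Fin 2 → ℂ), Module.finrank ℂ W = 1 ∧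
      ∀ g : G, ∀ v ∈ W, Matrix.mulVec ((ρ g : Matrix (Fin 2) (Fin 2) ℂ)) v ∈ W

/-- `𝔰𝔩₂(ℂ)`: the (3-dimensional) complex vector space of trace-zero `2 × 2`
complex matrices. -/
noncomputable def sl2C : Submodule ℂ (Matrix (Fin 2) (Fin 2) ℂ) :=
  LinearMap.ker (Matrix.traceLinearMap (Fin 2) ℂ ℂ)

/-- Conjugation `X ↦ ρ(g) X ρ(g)⁻¹` as a linear endomorphism of the matrix space. -/
noncomputable def conjMap {G : Type} [Group G] (ρ : G →* Matrix.SpecialLinearGroup (Fin 2) ℂ)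
    (g : G) : Matrix (Fin 2) (Fin 2) ℂ →ₗ[ℂ] Matrix (Fin 2) (Fin 2) ℂ :=
  (LinearMap.mulRight ℂ ((ρ g⁻¹ : Matrix.SpecialLinearGroup (Fin 2) ℂ) :
      Matrix (Fin 2) (Fin 2) ℂ)).comp
    (LinearMap.mulLeft ℂ ((ρ g : Matrix.SpecialLinearGroup (Fin 2) ℂ) :
      Matrix (Fin 2) (Fin 2) ℂ))

lemma conjMap_mem {G : Type} [Group G] (ρ : G →* Matrix.SpecialLinearGroup (Fin 2) ℂ)
    (g : G) : ∀ X ∈ sl2C, conjMap ρ g X ∈ sl2C := by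
  intro X hX
  have hX' : Matrix.trace X = 0 := hX
  show Matrix.trace
      (((ρ g : Matrix.SpecialLinearGroup (Fin 2) ℂ) : Matrix (Fin 2) (Fin 2) ℂ) * X *
        ((ρ g⁻¹ : Matrix.SpecialLinearGroup (Fin 2) ℂ) : Matrix (Fin 2) (Fin 2) ℂ)) = 0
  rw [Matrix.trace_mul_cycle, ← Matrix.SpecialLinearGroup.coe_mul, ← map_mul,
    inv_mul_cancel, map_one, Matrix.SpecialLinearGroup.coe_one, one_mul, hX']

/-- The adjoint representation `Ad ∘ ρ` of `G` on `𝔰𝔩₂(ℂ)`,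
`g • X = ρ(g) X ρ(g)⁻¹`. -/
noncomputable def adRep {G : Type} [Group G] (ρ : G →* Matrix.SpecialLinearGroup (Fin 2) ℂ) :
    Representation ℂ G sl2C where
  toFun g := (conjMap ρ g).restrict (conjMap_mem ρ g)
  map_one' := by
    ext X
    simp [conjMap, LinearMap.restrict_apply]
  map_mul' g h := by
    ext X
    simp [conjMap, LinearMap.restrict_apply, map_mul, mul_inv_rev, mul_assoc]

namespace TorusProof

open Matrix groupCohomology Module

local notation "M2" => Matrix (Fin 2) (Fin 2) ℂ
local notation "SL2" => Matrix.SpecialLinearGroup (Fin 2) ℂ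

/-! ### Generic matrix lemmas -/

lemma coe_mul_inv {G : Type} [Group G] (ρ : G →* SL2) (g : G) :
    ((ρ g : SL2) : M2) * ((ρ g⁻¹ : SL2) : M2) = 1 := by
  rw [← Matrix.SpecialLinearGroup.coe_mul, ← _root_.map_mul, mul_inv_cancel, _root_.map_one,
    Matrix.SpecialLinearGroup.coe_one]

lemma coe_inv_mul {G : Type} [Group G] (ρ : G →* SL2) (g : G) :
    ((ρ g⁻¹ : SL2) : M2) * ((ρ g : SL2) : M2) = 1 := by
  rw [← Matrix.SpecialLinearGroup.coe_mul, ← _root_.map_mul, inv_mul_cancel, _root_.map_one,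
    Matrix.SpecialLinearGroup.coe_one]

lemma scalar_commute' (c : ℂ) (P : M2) : Commute (c • 1) P :=
  (Commute.one_left P).smul_left c

lemma commute_of_inv {N M M' : M2} (h : Commute N M) (h1 : M * M' = 1) (h2 : M' * M = 1) :
    Commute N M' := by
  show N * M' = M' * N
  calc N * M' = M' * M * (N * M') := by rw [h2, one_mul]
    _ = M' * (N * M) * M' := by simp only [mul_assoc, h.eq]
    _ = M' * (N * (M * M')) := by simp only [mul_assoc]
    _ = M' * N := by rw [h1, mul_one]

lemma not_scalar_iff (M : M2) :
    (¬ ∃ c : ℂ, M = c • 1) ↔ ¬ (M 0 1 = 0 ∧ M 1 0 = 0 ∧ M 0 0 = M 1 1) := by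
  constructor
  · intro h hc
    exact h ⟨M 0 0, by
      ext i j
      fin_cases i <;> fin_cases j <;>
        simp [Matrix.smul_apply, Matrix.one_apply, hc.1, hc.2.1, hc.2.2.symm]⟩
  · rintro h ⟨c, rfl⟩
    exact h (by simp [Matrix.smul_apply, Matrix.one_apply])

/-- A nonscalar `2×2` matrix admits an invariant line preserved by everything commuting
with it. -/
lemma exists_invariant_line (N : M2) (hN : ¬ ∃ c : ℂ, N = c • 1) :
    ∃ W : Submodule ℂ (Fin 2 → ℂ), Module.finrank ℂ W = 1 ∧
      ∀ P : M2, Commute N P → ∀ v ∈ W, P *ᵥ v ∈ W := by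
  obtain ⟨μ, hμ⟩ := Module.End.exists_eigenvalue (Matrix.mulVecLin N)
  set W := Module.End.eigenspace (Matrix.mulVecLin N) μ with hW
  have hWne : W ≠ ⊥ := hμ
  have hWnt : W ≠ ⊤ := by
    intro htop
    apply hN
    refine ⟨μ, ?_⟩
    ext i j
    have hv : (Pi.single j 1 : Fin 2 → ℂ) ∈ W := htop ▸ Submodule.mem_top
    have h2 : N *ᵥ (Pi.single j 1 : Fin 2 → ℂ) = μ • (Pi.single j 1 : Fin 2 → ℂ) :=
      Module.End.mem_eigenspace_iff.1 hv
    have h3 := congrFun h2 i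
    simp only [Matrix.mulVec_single, Pi.smul_apply, Pi.single_apply, smul_eq_mul,
      Matrix.smul_apply, Matrix.one_apply, mul_one, mul_ite, mul_zero] at h3 ⊢
    simpa using h3
  refine ⟨W, ?_, ?_⟩
  · have hlt : Module.finrank ℂ W < 2 := by
      have := Submodule.finrank_lt (K := ℂ) (V := Fin 2 → ℂ) hWnt
      simpa using this
    have hpos : 0 < Module.finrank ℂ W := by
      rw [Module.finrank_pos_iff]
      exact Submodule.nontrivial_iff_ne_bot.mpr hWne
    omega
  · intro P hP v hv
    rw [hW, Module.End.mem_eigenspace_iff] at hv ⊢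
    simp only [Matrix.mulVecLin_apply] at hv ⊢
    rw [Matrix.mulVec_mulVec, hP.eq, ← Matrix.mulVec_mulVec, hv, Matrix.mulVec_smul]

/-- The centralizer of a nonscalar matrix meets `sl₂` in the line spanned by the
traceless part. -/
lemma mem_span_traceless {M X : M2} (hM : ¬ ∃ c : ℂ, M = c • 1) (hX : Matrix.trace X = 0)
    (hc : Commute M X) : ∃ t : ℂ, X = t • (M - (Matrix.trace M / 2) • 1) := by
  have hns := (not_scalar_iff M).mp hM
  have htr : X 0 0 + X 1 1 = 0 := by rwa [Matrix.trace_fin_two] at hX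
  have e00 := congrFun (congrFun hc.eq 0) 0
  have e01 := congrFun (congrFun hc.eq 0) 1
  have e10 := congrFun (congrFun hc.eq 1) 0
  simp only [Matrix.mul_apply, Fin.sum_univ_two] at e00 e01 e10
  have key : ∀ t : ℂ, X 0 0 = t * (M 0 0 - (M 0 0 + M 1 1) / 2) → X 0 1 = t * M 0 1 →
      X 1 0 = t * M 1 0 → X = t • (M - (Matrix.trace M / 2) • 1) := by
    intro t h1 h2 h3
    ext i j
    fin_cases i <;> fin_cases j <;>
      simp [Matrix.smul_apply, Matrix.sub_apply, Matrix.one_apply, Matrix.trace_fin_two,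
        smul_eq_mul]
    · linear_combination h1
    · linear_combination h2
    · linear_combination h3
    · linear_combination htr - h1
  rcases ne_or_eq (M 0 1) 0 with hb | hb
  · refine ⟨X 0 1 / M 0 1, key _ ?_ ?_ ?_⟩
    · rw [div_mul_eq_mul_div, eq_div_iff hb]
      linear_combination (M 0 1 / 2) * htr - e01 / 2
    · exact (div_mul_cancel₀ _ hb).symm
    · rw [div_mul_eq_mul_div, eq_div_iff hb]
      linear_combination e00
  · rcases ne_or_eq (M 1 0) 0 with hcne | hc0
    · refine ⟨X 1 0 / M 1 0, key _ ?_ ?_ ?_⟩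
      · rw [div_mul_eq_mul_div, eq_div_iff hcne]
        linear_combination e10 / 2 + (M 1 0 / 2) * htr
      · rw [hb, mul_zero]
        have hy : X 0 1 * M 1 0 = 0 := by linear_combination X 1 0 * hb - e00
        exact (mul_eq_zero.mp hy).resolve_right hcne
      · exact (div_mul_cancel₀ _ hcne).symm
    · have had : M 0 0 ≠ M 1 1 := fun h => hns ⟨hb, hc0, h⟩
      refine ⟨X 0 0 * 2 / (M 0 0 - M 1 1), key _ ?_ ?_ ?_⟩
      · rw [div_mul_eq_mul_div, eq_div_iff (sub_ne_zero.mpr had)]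
        ring
      · rw [hb, mul_zero]
        have hy : X 0 1 * (M 0 0 - M 1 1) = 0 := by
          linear_combination e01 + (X 0 0 - X 1 1) * hb
        exact (mul_eq_zero.mp hy).resolve_right (sub_ne_zero.mpr had)
      · rw [hc0, mul_zero]
        have hz : X 1 0 * (M 0 0 - M 1 1) = 0 := by
          linear_combination (X 0 0 - X 1 1) * hc0 - e10
        exact (mul_eq_zero.mp hz).resolve_right (sub_ne_zero.mpr had)

end TorusProof

namespace TorusProof

open Matrix groupCohomology Module

/-! ### The torus knot group -/

section Torus

variable (p q : ℤ)

/-- The generator `a`. -/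
def aG : TorusGroup p q := PresentedGroup.of true

/-- The generator `b`. -/
def bG : TorusGroup p q := PresentedGroup.of false

lemma generated (s : Subgroup (TorusGroup p q)) (ha : aG p q ∈ s) (hb : bG p q ∈ s) :
    ∀ g, g ∈ s :=
  PresentedGroup.generated_by _ s (fun j => by cases j with
    | false => exact hb
    | true => exact ha)

lemma relKey : (aG p q) ^ p * ((bG p q) ^ q)⁻¹ = 1 := by
  have hmem : (FreeGroup.of true ^ p * (FreeGroup.of false ^ q)⁻¹ : FreeGroup Bool) ∈
      Subgroup.normalClosure (torusRels p q) :=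
    Subgroup.subset_normalClosure (Set.mem_singleton _)
  have h : PresentedGroup.mk (torusRels p q)
      (FreeGroup.of true ^ p * (FreeGroup.of false ^ q)⁻¹) = 1 :=
    (QuotientGroup.eq_one_iff _).2 hmem
  rw [_root_.map_mul, _root_.map_zpow, _root_.map_inv, _root_.map_zpow] at h
  exact h

lemma rel_zpow : (aG p q) ^ p = (bG p q) ^ q :=
  mul_inv_eq_one.mp (relKey p q)

lemma rel_pow (hp : 0 ≤ p) (hq : 0 ≤ q) :
    (aG p q) ^ p.toNat = (bG p q) ^ q.toNat := by
  have h1 : (aG p q) ^ ((p.toNat : ℤ)) = (bG p q) ^ ((q.toNat : ℤ)) := by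
    rw [Int.toNat_of_nonneg hp, Int.toNat_of_nonneg hq]
    exact rel_zpow p q
  rwa [zpow_natCast, zpow_natCast] at h1

end Torus

section Rep

local notation "M2" => Matrix (Fin 2) (Fin 2) ℂ
local notation "SL2" => Matrix.SpecialLinearGroup (Fin 2) ℂ

variable {p q : ℤ} (ρ : TorusGroup p q →* SL2)

lemma sl2_trace (X : sl2C) : Matrix.trace (X : M2) = 0 := X.2

lemma adRep_apply (g : TorusGroup p q) (X : sl2C) :
    ((adRep ρ g X : sl2C) : M2) = ((ρ g : SL2) : M2) * (X : M2) * ((ρ g⁻¹ : SL2) : M2) :=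
  rfl

lemma adRep_fix_iff (g : TorusGroup p q) (X : sl2C) :
    adRep ρ g X = X ↔ Commute ((ρ g : SL2) : M2) (X : M2) := by
  constructor
  · intro h
    have h1 := congrArg (Subtype.val) h
    rw [adRep_apply] at h1
    have h2 := congrArg (fun Z => Z * ((ρ g : SL2) : M2)) h1
    simp only [mul_assoc, coe_inv_mul, mul_one] at h2
    exact h2
  · intro h
    apply Subtype.ext
    rw [adRep_apply, h.eq, mul_assoc, coe_mul_inv, mul_one]

/-- Scalar image implies trivial adjoint action. -/
lemma adRep_eq_one_of_scalar (g : TorusGroup p q) (h : ∃ c : ℂ, ((ρ g : SL2) : M2) = c • 1) :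
    adRep ρ g = 1 := by
  obtain ⟨c, hc⟩ := h
  ext X : 1
  rw [Module.End.one_apply]
  rw [adRep_fix_iff, hc]
  exact scalar_commute' c _

variable (hirr : IrreducibleSL2 ρ)
include hirr

/-- Anything commuting with the images of both generators is scalar. -/
lemma central_scalar (N : M2)
    (ha : Commute N ((ρ (aG p q) : SL2) : M2)) (hb : Commute N ((ρ (bG p q) : SL2) : M2)) :
    ∃ c : ℂ, N = c • 1 := by
  by_contra hN
  obtain ⟨W, hW1, hW2⟩ := exists_invariant_line N hN
  have hsub : ∀ g : TorusGroup p q, Commute N ((ρ g : SL2) : M2) := by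
    apply generated p q
      { carrier := {g | Commute N ((ρ g : SL2) : M2)}
        one_mem' := by
          show Commute N ((ρ 1 : SL2) : M2)
          rw [_root_.map_one, Matrix.SpecialLinearGroup.coe_one]
          exact Commute.one_right N
        mul_mem' := by
          intro x y hx hy
          show Commute N ((ρ (x * y) : SL2) : M2)
          rw [_root_.map_mul, Matrix.SpecialLinearGroup.coe_mul]
          exact Commute.mul_right hx hy
        inv_mem' := by
          intro x hx
          exact commute_of_inv hx (coe_mul_inv ρ x) (coe_inv_mul ρ x) }
      ha hb
  exact hirr ⟨W, hW1, fun g v hv => hW2 _ (hsub g) v hv⟩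

/-- A traceless matrix commuting with the images of both generators is zero. -/
lemma traceless_central_zero (X : M2) (hX : Matrix.trace X = 0)
    (ha : Commute X ((ρ (aG p q) : SL2) : M2)) (hb : Commute X ((ρ (bG p q) : SL2) : M2)) :
    X = 0 := by
  obtain ⟨c, hc⟩ := central_scalar ρ hirr X ha hb
  have ht : (0 : ℂ) = c * 2 := by
    rw [← hX, hc, Matrix.trace_smul, Matrix.trace_one]
    simp
  have hc0 : c = 0 := by
    rcases mul_eq_zero.mp ht.symm with h | h
    · exact h
    · norm_num at h
  rw [hc, hc0, zero_smul]

lemma not_scalar_a : ¬ ∃ c : ℂ, ((ρ (aG p q) : SL2) : M2) = c • 1 := by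
  intro hA
  obtain ⟨c, hc⟩ := hA
  by_cases hB : ∃ d : ℂ, ((ρ (bG p q) : SL2) : M2) = d • 1
  · obtain ⟨d, hd⟩ := hB
    have h := central_scalar ρ hirr (Matrix.single 0 1 (1 : ℂ))
      (by rw [hc]; exact (scalar_commute' c _).symm)
      (by rw [hd]; exact (scalar_commute' d _).symm)
    obtain ⟨e, he⟩ := h
    have h01 := congrFun (congrFun he 0) 1
    have h00 := congrFun (congrFun he 0) 0
    simp [Matrix.single, Matrix.smul_apply, Matrix.one_apply] at h01
  · apply hB
    exact central_scalar ρ hirr _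
      (by rw [hc]; exact (scalar_commute' c _).symm)
      (Commute.refl _)

lemma not_scalar_b : ¬ ∃ c : ℂ, ((ρ (bG p q) : SL2) : M2) = c • 1 := by
  intro hB
  obtain ⟨c, hc⟩ := hB
  have : ∃ d : ℂ, ((ρ (aG p q) : SL2) : M2) = d • 1 :=
    central_scalar ρ hirr _ (Commute.refl _)
      (by rw [hc]; exact (scalar_commute' c _).symm)
  exact not_scalar_a ρ hirr this

end Rep

end TorusProof

namespace TorusProof

open Matrix groupCohomology Module

/-! ### Geometric series of an endomorphism of finite order -/

section Geom

variable {V : Type*} [AddCommGroup V] [Module ℂ V]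

lemma range_geom (A : V →ₗ[ℂ] V) (n : ℕ) (hn : n ≠ 0) (hA : A ^ n = 1) :
    LinearMap.range (∑ i ∈ Finset.range n, A ^ i) = LinearMap.ker (A - 1) := by
  apply le_antisymm
  · rintro _ ⟨X, rfl⟩
    rw [LinearMap.mem_ker]
    have h := congrArg (fun T : V →ₗ[ℂ] V => T X) (mul_geom_sum A n)
    simp only [Module.End.mul_apply] at h
    rw [hA] at h
    simpa using h
  · intro X hX
    have hfix : A X = X := by
      have := LinearMap.mem_ker.mp hX
      rwa [LinearMap.sub_apply, Module.End.one_apply, sub_eq_zero] at this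
    have hpow : ∀ i : ℕ, (A ^ i) X = X := by
      intro i
      induction i with
      | zero => simp
      | succ k ih => rw [pow_succ, Module.End.mul_apply, hfix, ih]
    have hs : (∑ i ∈ Finset.range n, A ^ i) X = (n : ℂ) • X := by
      rw [LinearMap.sum_apply, Finset.sum_congr rfl (fun i _ => hpow i),
        Finset.sum_const, Finset.card_range]
      exact (Nat.cast_smul_eq_nsmul ℂ n X).symm
    refine ⟨(n : ℂ)⁻¹ • X, ?_⟩
    rw [_root_.map_smul, hs, smul_smul, inv_mul_cancel₀ (Nat.cast_ne_zero.mpr hn), one_smul]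

end Geom

section Main

local notation "M2" => Matrix (Fin 2) (Fin 2) ℂ
local notation "SL2" => Matrix.SpecialLinearGroup (Fin 2) ℂ

variable {p q : ℤ} (ρ : TorusGroup p q →* Matrix.SpecialLinearGroup (Fin 2) ℂ)

/-- Sum of powers of the adjoint action of `a`. -/
noncomputable def Sa : sl2C →ₗ[ℂ] sl2C :=
  ∑ i ∈ Finset.range p.toNat, (adRep ρ (aG p q)) ^ i

/-- Sum of powers of the adjoint action of `b`. -/
noncomputable def Sb : sl2C →ₗ[ℂ] sl2C :=
  ∑ i ∈ Finset.range q.toNat, (adRep ρ (bG p q)) ^ i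

/-- The Fox-derivative map of the relation. -/
noncomputable def Lmap : (sl2C × sl2C) →ₗ[ℂ] sl2C :=
  Sa ρ ∘ₗ LinearMap.fst ℂ sl2C sl2C - Sb ρ ∘ₗ LinearMap.snd ℂ sl2C sl2C

lemma Lmap_apply (X Y : sl2C) : Lmap ρ (X, Y) = Sa ρ X - Sb ρ Y := rfl

/-- The traceless part of `ρ g`. -/
noncomputable def Xmat (g : TorusGroup p q) : M2 :=
  ((ρ g : SL2) : M2) - (Matrix.trace ((ρ g : SL2) : M2) / 2) • 1

lemma Xmat_traceless (g : TorusGroup p q) : Matrix.trace (Xmat ρ g) = 0 := by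
  simp only [Xmat, Matrix.trace_sub, Matrix.trace_smul, Matrix.trace_one]
  simp

/-- The traceless part of `ρ g` as an element of `sl2C`. -/
noncomputable def Xsl (g : TorusGroup p q) : sl2C :=
  ⟨Xmat ρ g, by
    show Xmat ρ g ∈ LinearMap.ker (Matrix.traceLinearMap (Fin 2) ℂ ℂ)
    rw [LinearMap.mem_ker]
    exact Xmat_traceless ρ g⟩

lemma mem_ker_sub_one_iff (g : TorusGroup p q) (X : sl2C) :
    X ∈ LinearMap.ker (adRep ρ g - 1) ↔ adRep ρ g X = X := by
  rw [LinearMap.mem_ker, LinearMap.sub_apply, Module.End.one_apply, sub_eq_zero]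

lemma ker_eq_span (g : TorusGroup p q) (hg : ¬ ∃ c : ℂ, ((ρ g : SL2) : M2) = c • 1) :
    LinearMap.ker (adRep ρ g - 1) = Submodule.span ℂ {Xsl ρ g} := by
  apply le_antisymm
  · intro X hX
    have hfix : adRep ρ g X = X := (mem_ker_sub_one_iff ρ g X).mp hX
    have hcomm := (adRep_fix_iff ρ g X).mp hfix
    obtain ⟨t, ht⟩ := mem_span_traceless hg (sl2_trace X) hcomm
    rw [Submodule.mem_span_singleton]
    refine ⟨t, ?_⟩
    apply Subtype.ext
    show t • Xmat ρ g = (X : M2)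
    rw [ht]
    rfl
  · rw [Submodule.span_le, Set.singleton_subset_iff, SetLike.mem_coe,
      mem_ker_sub_one_iff, adRep_fix_iff]
    show Commute _ (Xmat ρ g)
    unfold Xmat
    exact (Commute.refl _).sub_right ((scalar_commute' _ _).symm)

lemma Xsl_ne_zero (g : TorusGroup p q) (hg : ¬ ∃ c : ℂ, ((ρ g : SL2) : M2) = c • 1) :
    Xsl ρ g ≠ 0 := by
  intro h
  apply hg
  have h0 : Xmat ρ g = 0 := congrArg Subtype.val h
  refine ⟨Matrix.trace ((ρ g : SL2) : M2) / 2, ?_⟩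
  rwa [Xmat, sub_eq_zero] at h0

section NeedIrr

variable (hirr : IrreducibleSL2 ρ)
include hirr

lemma adRep_a_pow (hp : 0 ≤ p) (hq : 0 ≤ q) : (adRep ρ (aG p q)) ^ p.toNat = 1 := by
  rw [← _root_.map_pow]
  apply adRep_eq_one_of_scalar
  apply central_scalar ρ hirr
  · rw [_root_.map_pow, Matrix.SpecialLinearGroup.coe_pow]
    exact (Commute.refl _).pow_left _
  · rw [rel_pow p q hp hq, _root_.map_pow, Matrix.SpecialLinearGroup.coe_pow]
    exact (Commute.refl _).pow_left _

lemma adRep_b_pow (hp : 0 ≤ p) (hq : 0 ≤ q) : (adRep ρ (bG p q)) ^ q.toNat = 1 := by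
  rw [← _root_.map_pow]
  apply adRep_eq_one_of_scalar
  apply central_scalar ρ hirr
  · rw [← rel_pow p q hp hq, _root_.map_pow, Matrix.SpecialLinearGroup.coe_pow]
    exact (Commute.refl _).pow_left _
  · rw [_root_.map_pow, Matrix.SpecialLinearGroup.coe_pow]
    exact (Commute.refl _).pow_left _

end NeedIrr

lemma finrank_sl2 : Module.finrank ℂ sl2C = 3 := by
  have hsur : LinearMap.range (Matrix.traceLinearMap (Fin 2) ℂ ℂ) = ⊤ := by
    rw [LinearMap.range_eq_top]
    intro c
    refine ⟨!![c, 0; 0, 0], ?_⟩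
    show Matrix.trace !![c, 0; 0, 0] = c
    rw [Matrix.trace_fin_two]
    simp
  have h := LinearMap.finrank_range_add_finrank_ker (Matrix.traceLinearMap (Fin 2) ℂ ℂ)
  rw [hsur, finrank_top, finrank_self] at h
  have h4 : Module.finrank ℂ M2 = 4 := by
    rw [Module.finrank_matrix]
    simp
  rw [h4] at h
  show Module.finrank ℂ (LinearMap.ker (Matrix.traceLinearMap (Fin 2) ℂ ℂ)) = 3
  omega

section NeedIrr2

variable (hirr : IrreducibleSL2 ρ)
include hirr

lemma finrank_ker_Lmap (hp : 2 ≤ p) (hq : 2 ≤ q) :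
    Module.finrank ℂ (LinearMap.ker (Lmap ρ)) = 4 := by
  have hp0 : (0 : ℤ) ≤ p := by omega
  have hq0 : (0 : ℤ) ≤ q := by omega
  have hpn : p.toNat ≠ 0 := by omega
  have hqn : q.toNat ≠ 0 := by omega
  have hrangeSa : LinearMap.range (Sa ρ) = LinearMap.ker (adRep ρ (aG p q) - 1) :=
    range_geom _ _ hpn (adRep_a_pow ρ hirr hp0 hq0)
  have hrangeSb : LinearMap.range (Sb ρ) = LinearMap.ker (adRep ρ (bG p q) - 1) :=
    range_geom _ _ hqn (adRep_b_pow ρ hirr hp0 hq0)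
  have hA1 : Module.finrank ℂ (LinearMap.range (Sa ρ)) = 1 := by
    rw [hrangeSa, ker_eq_span ρ _ (not_scalar_a ρ hirr)]
    exact finrank_span_singleton (Xsl_ne_zero ρ _ (not_scalar_a ρ hirr))
  have hB1 : Module.finrank ℂ (LinearMap.range (Sb ρ)) = 1 := by
    rw [hrangeSb, ker_eq_span ρ _ (not_scalar_b ρ hirr)]
    exact finrank_span_singleton (Xsl_ne_zero ρ _ (not_scalar_b ρ hirr))
  have hrange : LinearMap.range (Lmap ρ) = LinearMap.range (Sa ρ) ⊔ LinearMap.range (Sb ρ) := by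
    apply le_antisymm
    · rintro _ ⟨⟨X, Y⟩, rfl⟩
      rw [Lmap_apply]
      exact Submodule.sub_mem _ (Submodule.mem_sup_left ⟨X, rfl⟩)
        (Submodule.mem_sup_right ⟨Y, rfl⟩)
    · apply sup_le
      · rintro _ ⟨X, rfl⟩
        exact ⟨(X, 0), by rw [Lmap_apply, _root_.map_zero, sub_zero]⟩
      · rintro _ ⟨Y, rfl⟩
        exact ⟨(0, -Y), by rw [Lmap_apply, _root_.map_zero, zero_sub, _root_.map_neg, neg_neg]⟩
  have hinf : LinearMap.range (Sa ρ) ⊓ LinearMap.range (Sb ρ) = ⊥ := by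
    rw [hrangeSa, hrangeSb, Submodule.eq_bot_iff]
    intro X hX
    obtain ⟨hXa, hXb⟩ := Submodule.mem_inf.mp hX
    have ca := (adRep_fix_iff ρ _ X).mp ((mem_ker_sub_one_iff ρ _ X).mp hXa)
    have cb := (adRep_fix_iff ρ _ X).mp ((mem_ker_sub_one_iff ρ _ X).mp hXb)
    exact Subtype.ext (traceless_central_zero ρ hirr (X : M2) (sl2_trace X) ca.symm cb.symm)
  have hrank2 : Module.finrank ℂ (LinearMap.range (Lmap ρ)) = 2 := by
    rw [hrange]
    have hsum := Submodule.finrank_sup_add_finrank_inf_eq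
      (LinearMap.range (Sa ρ)) (LinearMap.range (Sb ρ))
    rw [hinf, finrank_bot, hA1, hB1] at hsum
    omega
  have h := LinearMap.finrank_range_add_finrank_ker (Lmap ρ)
  have h6 : Module.finrank ℂ (sl2C × sl2C) = 6 := by
    rw [Module.finrank_prod, finrank_sl2]
  rw [hrank2, h6] at h
  omega

end NeedIrr2

end Main

end TorusProof

namespace TorusProof

open Matrix groupCohomology Module

/-! ### The semidirect product used to extend cocycles from the generators -/

/-- The semidirect product `sl₂(ℂ) ⋊ Π` (with `ρ` a phantom-style parameter fixing
the action). -/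
structure SD (p q : ℤ) (ρ : TorusGroup p q →* Matrix.SpecialLinearGroup (Fin 2) ℂ) where
  /-- vector component -/
  v : sl2C
  /-- group component -/
  g : TorusGroup p q

namespace SD

variable {p q : ℤ} {ρ : TorusGroup p q →* Matrix.SpecialLinearGroup (Fin 2) ℂ}

lemma ext' {x y : SD p q ρ} (hv : x.v = y.v) (hg : x.g = y.g) : x = y := by
  cases x; cases y; cases hv; cases hg; rfl

noncomputable instance : Mul (SD p q ρ) :=
  ⟨fun x y => ⟨x.v + adRep ρ x.g y.v, x.g * y.g⟩⟩

noncomputable instance : One (SD p q ρ) := ⟨⟨0, 1⟩⟩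

noncomputable instance : Inv (SD p q ρ) := ⟨fun x => ⟨-(adRep ρ x.g⁻¹ x.v), x.g⁻¹⟩⟩

@[simp] lemma mul_v (x y : SD p q ρ) : (x * y).v = x.v + adRep ρ x.g y.v := rfl
@[simp] lemma mul_g (x y : SD p q ρ) : (x * y).g = x.g * y.g := rfl
@[simp] lemma one_v : (1 : SD p q ρ).v = 0 := rfl
@[simp] lemma one_g : (1 : SD p q ρ).g = 1 := rfl
@[simp] lemma inv_v (x : SD p q ρ) : x⁻¹.v = -(adRep ρ x.g⁻¹ x.v) := rfl
@[simp] lemma inv_g (x : SD p q ρ) : x⁻¹.g = x.g⁻¹ := rfl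

noncomputable instance : Group (SD p q ρ) where
  mul_assoc x y z := by
    apply ext'
    · simp [_root_.map_mul, Module.End.mul_apply, add_assoc]
    · simp [mul_assoc]
  one_mul x := by
    apply ext'
    · simp
    · simp
  mul_one x := by
    apply ext'
    · simp
    · simp
  inv_mul_cancel x := by
    apply ext'
    · simp
    · simp

/-- The projection to the group component. -/
noncomputable def proj : SD p q ρ →* TorusGroup p q where
  toFun := SD.g
  map_one' := rfl
  map_mul' _ _ := rfl

lemma pow_eq (x : SD p q ρ) (n : ℕ) :
    x ^ n = ⟨(∑ i ∈ Finset.range n, (adRep ρ x.g) ^ i) x.v, x.g ^ n⟩ := by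
  induction n with
  | zero =>
    apply ext'
    · simp
    · simp
  | succ k ih =>
    rw [pow_succ, ih]
    apply ext'
    · show (∑ i ∈ Finset.range k, (adRep ρ x.g) ^ i) x.v + adRep ρ (x.g ^ k) x.v = _
      rw [_root_.map_pow, LinearMap.sum_apply, LinearMap.sum_apply, Finset.sum_range_succ]
    · simp [pow_succ]

end SD

section Cocycles

variable {p q : ℤ} (ρ : TorusGroup p q →* Matrix.SpecialLinearGroup (Fin 2) ℂ)

lemma cocycle_pow (f : cocycles₁ (Rep.of (adRep ρ))) (g : TorusGroup p q) (n : ℕ) :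
    f (g ^ n) = (∑ i ∈ Finset.range n, (adRep ρ g) ^ i) (f g) := by
  induction n with
  | zero => simpa using cocycles₁_map_one f
  | succ k ih =>
    have hcoc := (mem_cocycles₁_iff (A := Rep.of (adRep ρ)) f).1 f.2 g (g ^ k)
    rw [← pow_succ'] at hcoc
    rw [hcoc, ih, Rep.of_ρ]
    rw [Finset.sum_range_succ', LinearMap.add_apply, LinearMap.sum_apply, LinearMap.sum_apply,
      _root_.map_sum, pow_zero, Module.End.one_apply]
    congr 1
    refine Finset.sum_congr rfl fun i _ => ?_
    rw [pow_succ', Module.End.mul_apply]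

/-- Evaluation of a cocycle at the two generators. -/
noncomputable def evalMap : cocycles₁ (Rep.of (adRep ρ)) →ₗ[ℂ] sl2C × sl2C where
  toFun f := (f (aG p q), f (bG p q))
  map_add' f₁ f₂ := rfl
  map_smul' c f := rfl

lemma evalMap_mem_ker (hp : 0 ≤ p) (hq : 0 ≤ q) (f : cocycles₁ (Rep.of (adRep ρ))) :
    evalMap ρ f ∈ LinearMap.ker (Lmap ρ) := by
  rw [LinearMap.mem_ker]
  show Lmap ρ (f (aG p q), f (bG p q)) = 0
  rw [Lmap_apply, sub_eq_zero]
  calc Sa ρ (f (aG p q)) = f ((aG p q) ^ p.toNat) := (cocycle_pow ρ f _ _).symm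
    _ = f ((bG p q) ^ q.toNat) := by rw [rel_pow p q hp hq]
    _ = Sb ρ (f (bG p q)) := cocycle_pow ρ f _ _

lemma evalMap_injective : Function.Injective (evalMap ρ) := by
  rw [injective_iff_map_eq_zero]
  intro f hf
  have hfa : f (aG p q) = 0 := congrArg Prod.fst hf
  have hfb : f (bG p q) = 0 := congrArg Prod.snd hf
  have hall : ∀ g : TorusGroup p q, f g = 0 := by
    intro g
    refine PresentedGroup.induction_on (C := fun x => f x = 0) g ?_
    intro z
    induction z using FreeGroup.induction_on with
    | C1 => rw [_root_.map_one]; exact cocycles₁_map_one f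
    | of x =>
      cases x
      · exact hfb
      · exact hfa
    | inv_of x hx =>
      rw [_root_.map_inv]
      have h := cocycles₁_map_inv f (PresentedGroup.mk (torusRels p q) (FreeGroup.of x))
      rw [hx, neg_zero] at h
      exact (Representation.inv_self_apply (Rep.of (adRep ρ)).ρ _ _).symm.trans
        (by rw [h, _root_.map_zero])
    | mul x y hx hy =>
      rw [_root_.map_mul, (mem_cocycles₁_iff (A := Rep.of (adRep ρ)) f).1 f.2, hx, hy, _root_.map_zero,
        zero_add]
  apply Subtype.ext
  funext g
  exact hall g

lemma evalMap_range (hp : 2 ≤ p) (hq : 2 ≤ q) :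
    LinearMap.range (evalMap ρ) = LinearMap.ker (Lmap ρ) := by
  apply le_antisymm
  · rintro _ ⟨f, rfl⟩
    exact evalMap_mem_ker ρ (by omega) (by omega) f
  · rintro ⟨X, Y⟩ hmem
    have hXY : Sa ρ X - Sb ρ Y = 0 := by
      have := LinearMap.mem_ker.mp hmem
      rwa [Lmap_apply] at this
    set fgen : Bool → SD p q ρ := fun t => if t then ⟨X, aG p q⟩ else ⟨Y, bG p q⟩ with hfgen
    have h1 : FreeGroup.lift fgen (FreeGroup.of true) = (⟨X, aG p q⟩ : SD p q ρ) := by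
      rw [FreeGroup.lift_apply_of, hfgen]
      simp
    have h2 : FreeGroup.lift fgen (FreeGroup.of false) = (⟨Y, bG p q⟩ : SD p q ρ) := by
      rw [FreeGroup.lift_apply_of, hfgen]
      simp
    have hab : (aG p q) ^ p.toNat * ((bG p q) ^ q.toNat)⁻¹ = 1 := by
      rw [rel_pow p q (by omega) (by omega), mul_inv_cancel]
    have hrel : ∀ r ∈ torusRels p q, (FreeGroup.lift fgen) r = 1 := by
      intro r hr
      rw [torusRels, Set.mem_singleton_iff] at hr
      subst hr
      have hzp : ∀ x : SD p q ρ, x ^ p = x ^ p.toNat := by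
        intro x
        rw [← zpow_natCast]
        congr 1
        omega
      have hzq : ∀ x : SD p q ρ, x ^ q = x ^ q.toNat := by
        intro x
        rw [← zpow_natCast]
        congr 1
        omega
      rw [_root_.map_mul, _root_.map_inv, _root_.map_zpow, _root_.map_zpow, h1, h2,
        hzp, hzq, SD.pow_eq, SD.pow_eq]
      apply SD.ext'
      · simp only [SD.mul_v, SD.inv_v, SD.inv_g, SD.one_v]
        rw [_root_.map_neg, ← Module.End.mul_apply, ← _root_.map_mul, hab, _root_.map_one, Module.End.one_apply]
        rw [← sub_eq_add_neg]
        exact hXY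
      · simp only [SD.mul_g, SD.inv_g, SD.one_g]
        exact hab
    set ψ := PresentedGroup.toGroup hrel with hψ
    have hproj : ∀ g : TorusGroup p q, (ψ g).g = g := by
      have hcomp : SD.proj.comp ψ = MonoidHom.id (TorusGroup p q) := by
        apply PresentedGroup.ext
        intro x
        rw [MonoidHom.comp_apply, MonoidHom.id_apply]
        show (ψ (PresentedGroup.of x)).g = PresentedGroup.of x
        rw [hψ, PresentedGroup.toGroup.of]
        cases x
        · rw [hfgen]; simp; rfl
        · rw [hfgen]; simp; rfl
      intro g
      exact DFunLike.congr_fun hcomp g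
    have hmem' : (fun g => (ψ g).v) ∈ cocycles₁ (Rep.of (adRep ρ)) := by
      rw [mem_cocycles₁_iff]
      intro g h
      have hv := congrArg SD.v (_root_.map_mul ψ g h)
      rw [SD.mul_v, hproj g] at hv
      exact hv.trans (add_comm _ _)
    refine ⟨⟨fun g => (ψ g).v, hmem'⟩, ?_⟩
    have hψa : ψ (aG p q) = (⟨X, aG p q⟩ : SD p q ρ) := by
      show ψ (PresentedGroup.of true) = _
      rw [hψ, PresentedGroup.toGroup.of, hfgen]
      simp
    have hψb : ψ (bG p q) = (⟨Y, bG p q⟩ : SD p q ρ) := by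
      show ψ (PresentedGroup.of false) = _
      rw [hψ, PresentedGroup.toGroup.of, hfgen]
      simp
    show ((ψ (aG p q)).v, (ψ (bG p q)).v) = (X, Y)
    rw [hψa, hψb]

end Cocycles

end TorusProof

/-- Every irreducible `SL(2,ℂ)`-representation of the torus knot group
`Π = ⟨a, b | a^p = b^q⟩` is regular: the first group cohomology of `Π` with
coefficients in the adjoint representation on `𝔰𝔩₂(ℂ)` is one-dimensional. -/
theorem h1_adjoint_one_dimensional (p q : ℤ) (hp : 2 ≤ p) (hq : 2 ≤ q)
    (hpq : IsCoprime p q)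
    (ρ : TorusGroup p q →* Matrix.SpecialLinearGroup (Fin 2) ℂ)
    (hirr : IrreducibleSL2 ρ) :
    Module.finrank ℂ (groupCohomology.H1 (Rep.of (adRep ρ))) = 1 := by
  classical
  have hinj := TorusProof.evalMap_injective ρ
  have hrange := TorusProof.evalMap_range ρ hp hq
  haveI hfin : FiniteDimensional ℂ (groupCohomology.cocycles₁ (Rep.of (adRep ρ))) :=
    FiniteDimensional.of_injective (TorusProof.evalMap ρ) hinj
  have h4 : Module.finrank ℂ (groupCohomology.cocycles₁ (Rep.of (adRep ρ))) = 4 := by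
    have h := LinearMap.finrank_range_of_inj hinj
    rw [hrange, TorusProof.finrank_ker_Lmap ρ hirr hp hq] at h
    exact h.symm
  have hkerd : LinearMap.ker (groupCohomology.d₀₁ (Rep.of (adRep ρ))).hom = ⊥ := by
    rw [groupCohomology.d₀₁_ker_eq_invariants, Submodule.eq_bot_iff]
    intro X hX
    rw [Representation.mem_invariants] at hX
    have ca := (TorusProof.adRep_fix_iff ρ _ X).mp (hX (TorusProof.aG p q))
    have cb := (TorusProof.adRep_fix_iff ρ _ X).mp (hX (TorusProof.bG p q))
    exact Subtype.ext (TorusProof.traceless_central_zero ρ hirr _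
      (TorusProof.sl2_trace X) ca.symm cb.symm)
  have hinj0 : Function.Injective (groupCohomology.d₀₁ (Rep.of (adRep ρ))).hom :=
    LinearMap.ker_eq_bot.mp hkerd
  haveI hfin' : FiniteDimensional ℂ (LinearMap.ker
      (groupCohomology.shortComplexH1 (Rep.of (adRep ρ))).g.hom) := hfin
  have h4' : Module.finrank ℂ (LinearMap.ker
      (groupCohomology.shortComplexH1 (Rep.of (adRep ρ))).g.hom) = 4 := h4
  have h3 : Module.finrank ℂ (LinearMap.range
      (groupCohomology.shortComplexH1 (Rep.of (adRep ρ))).moduleCatToCycles) = 3 := by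
    rw [LinearMap.finrank_range_of_inj
      (f := (groupCohomology.shortComplexH1 (Rep.of (adRep ρ))).moduleCatToCycles)
      (fun x y hxy => hinj0 (congrArg Subtype.val hxy))]
    exact TorusProof.finrank_sl2
  have hquot := Submodule.finrank_quotient_add_finrank (LinearMap.range
      (groupCohomology.shortComplexH1 (Rep.of (adRep ρ))).moduleCatToCycles)
  rw [h3, h4'] at hquot
  rw [(groupCohomology.H1Iso (Rep.of (adRep ρ))).toLinearEquiv.finrank_eq]
  show Module.finrank ℂ (LinearMap.ker
      (groupCohomology.shortComplexH1 (Rep.of (adRep ρ))).g.hom ⧸ LinearMap.range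
      (groupCohomology.shortComplexH1 (Rep.of (adRep ρ))).moduleCatToCycles) = 1
  omega
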